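/- Let p ≥ 2 be an integer, s > 0, C > 0, M > 0, and let {x_k}, {y_k}, {z_k} be sequences generated by the higher-order mirror descent x_{k+1} = (p/(k+p)) ∇φ*(z_k) + (k/(k+p)) y_k, z_{k+1} = z_k − C s p (k+1)^{(p−1)} ∇f(y_{k+1}), where each y_k satisfies ⟨∇f(y_k), x_k − y_k⟩ ≥ M s^{1/(p−1)} ‖∇f(y_k)‖_*^{p/(p−1)}, with x₀ = ∇φ*(z₀). If 0 < C ≤ σ M^{p−1} / ((p−1)^{p−1} p), then for every k ≥ 1, f(y_k) − f(x*) ≤ D_φ(x*, x₀) / (C s k^{(p)}). -/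

import Mathlib

open Set Filter Topology

/-- The Fenchel conjugate of `φ`, as a function on the dual space. -/
noncomputable def fenchelDual {E : Type*} [NormedAddCommGroup E] [NormedSpace ℝ E]
    (φ : E → ℝ) (z : StrongDual ℝ E) : ℝ :=
  ⨆ x : E, (z x - φ x)

section Aux

lemma grad_subgrad_aux {F : Type*} [NormedAddCommGroup F] [NormedSpace ℝ F]
    {g : F → ℝ} {D : F →L[ℝ] ℝ} {x : F}
    (hseg : ∀ (w : F), ∀ t : ℝ, t ∈ Set.Ioc (0:ℝ) 1 →
      g (x + t • (w - x)) ≤ (1 - t) * g x + t * g w)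
    (hd : HasFDerivAt g D x) (w : F) : g x + D (w - x) ≤ g w := by
  have hc : HasDerivAt (fun t : ℝ => x + t • (w - x)) (w - x) 0 := by
    simpa using ((hasDerivAt_id (0:ℝ)).smul_const (w - x)).const_add x
  have hcomp : HasDerivAt (fun t : ℝ => g (x + t • (w - x))) (D (w - x)) 0 := by
    have := hd.comp_hasDerivAt_of_eq (0:ℝ) hc (by simp)
    exact this
  set h : ℝ → ℝ := fun t => g (x + t • (w - x)) with hh
  have hslope : Tendsto (slope h 0) (𝓝[>] 0) (𝓝 (D (w - x))) :=
    (hasDerivAt_iff_tendsto_slope.mp hcomp).mono_left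
      (nhdsWithin_mono 0 (fun t ht => ne_of_gt ht))
  have hbound : ∀ᶠ t in 𝓝[>] (0:ℝ), slope h 0 t ≤ g w - g x := by
    filter_upwards [Ioc_mem_nhdsGT (zero_lt_one)] with t ht
    have h1 : h t ≤ (1 - t) * g x + t * g w := hseg w t ht
    have h0 : h 0 = g x := by simp [hh]
    rw [slope_def_field]
    have : (h t - h 0) / (t - 0) ≤ g w - g x := by
      rw [h0, sub_zero, div_le_iff₀ ht.1]
      nlinarith [ht.1]
    simpa [div_eq_inv_mul] using this
  have := le_of_tendsto hslope hbound
  linarith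

lemma young_aux (p : ℕ) (hp : 2 ≤ p) {σ a t : ℝ} (hσ : 0 < σ) (ha : 0 ≤ a) (ht : 0 ≤ t) :
    a * t ≤ σ / p * t ^ p +
      ((p : ℝ) - 1) / p * σ ^ (-(1:ℝ) / ((p : ℝ) - 1)) * a ^ ((p : ℝ) / ((p : ℝ) - 1)) := by
  have hP : (2:ℝ) ≤ (p:ℝ) := by exact_mod_cast hp
  have hP1 : (1:ℝ) < (p:ℝ) := by linarith
  have hPpos : (0:ℝ) < (p:ℝ) := by linarith
  have hP1pos : (0:ℝ) < (p:ℝ) - 1 := by linarith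
  have hpq : ((p:ℝ)).HolderConjugate ((p:ℝ) / ((p:ℝ) - 1)) :=
    Real.HolderConjugate.conjExponent hP1
  have h1 : (σ ^ ((1:ℝ)/(p:ℝ)) * t) * (a * σ ^ (-(1:ℝ)/(p:ℝ))) ≤
      (σ ^ ((1:ℝ)/(p:ℝ)) * t) ^ (p:ℝ) / (p:ℝ) +
      (a * σ ^ (-(1:ℝ)/(p:ℝ))) ^ ((p:ℝ)/((p:ℝ)-1)) / ((p:ℝ)/((p:ℝ)-1)) :=
    Real.young_inequality_of_nonneg
      (mul_nonneg (Real.rpow_nonneg hσ.le _) ht) (mul_nonneg ha (Real.rpow_nonneg hσ.le _)) hpq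
  have e0 : (σ ^ ((1:ℝ)/(p:ℝ)) * t) * (a * σ ^ (-(1:ℝ)/(p:ℝ))) = a * t := by
    have : σ ^ ((1:ℝ)/(p:ℝ)) * σ ^ (-(1:ℝ)/(p:ℝ)) = 1 := by
      rw [← Real.rpow_add hσ]
      norm_num [neg_div]
    calc (σ ^ ((1:ℝ)/(p:ℝ)) * t) * (a * σ ^ (-(1:ℝ)/(p:ℝ)))
        = (σ ^ ((1:ℝ)/(p:ℝ)) * σ ^ (-(1:ℝ)/(p:ℝ))) * (a * t) := by ring
      _ = a * t := by rw [this, one_mul]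
  have e1 : (σ ^ ((1:ℝ)/(p:ℝ)) * t) ^ (p:ℝ) / (p:ℝ) = σ / p * t ^ p := by
    rw [Real.mul_rpow (Real.rpow_nonneg hσ.le _) ht, ← Real.rpow_natCast t p,
      ← Real.rpow_mul hσ.le]
    rw [one_div_mul_cancel (ne_of_gt hPpos), Real.rpow_one]
    ring
  have e2 : (a * σ ^ (-(1:ℝ)/(p:ℝ))) ^ ((p:ℝ)/((p:ℝ)-1)) / ((p:ℝ)/((p:ℝ)-1)) =
      ((p : ℝ) - 1) / p * σ ^ (-(1:ℝ) / ((p : ℝ) - 1)) * a ^ ((p : ℝ) / ((p : ℝ) - 1)) := by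
    rw [Real.mul_rpow ha (Real.rpow_nonneg hσ.le _), ← Real.rpow_mul hσ.le]
    have : (-(1:ℝ)/(p:ℝ)) * ((p:ℝ)/((p:ℝ)-1)) = -(1:ℝ)/((p:ℝ)-1) := by
      field_simp
    rw [this]
    field_simp
  rw [e0, e1, e2] at h1
  exact h1


lemma key_aux (p : ℕ) (hp : 2 ≤ p) {σ C s M β K : ℝ} (hσ : 0 < σ) (hC : 0 < C) (hs : 0 < s)
    (hM : 0 < M) (hβ : 0 < β) (hK : 0 ≤ K)
    (hCub : C ≤ σ * M ^ (p-1) / (((p:ℝ)-1)^(p-1) * p))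
    (hβle : β ≤ (K + p)^(p-1)) :
    ((p:ℝ)-1)/p * σ ^ (-(1:ℝ)/((p:ℝ)-1)) * (C*s*p*β) ^ ((p:ℝ)/((p:ℝ)-1)) ≤
      C*s*((K+p)*β) * (M * s ^ ((1:ℝ)/((p:ℝ)-1))) := by
  have hP : (2:ℝ) ≤ (p:ℝ) := by exact_mod_cast hp
  have hPpos : (0:ℝ) < p := by linarith
  have hP1 : (0:ℝ) < (p:ℝ)-1 := by linarith
  set m := p - 1 with hm
  have hm1 : m + 1 = p := by omega
  have hmR : (m:ℝ) = (p:ℝ) - 1 := by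
    rw [hm, Nat.cast_sub (by omega : 1 ≤ p)]; norm_num
  have hm0 : m ≠ 0 := by omega
  have hX : (0:ℝ) ≤ C*s*(p:ℝ)*β := by positivity
  have hRpos : (0:ℝ) ≤ C*s*((K+(p:ℝ))*β) * (M * s ^ ((1:ℝ)/((p:ℝ)-1))) := by positivity
  refine le_of_pow_le_pow_left₀ hm0 hRpos ?_
  have e1 : (σ ^ (-(1:ℝ)/((p:ℝ)-1)))^m = σ⁻¹ := by
    rw [← Real.rpow_natCast (σ ^ (-(1:ℝ)/((p:ℝ)-1))) m, ← Real.rpow_mul hσ.le, hmR,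
      div_mul_cancel₀ _ (ne_of_gt hP1), Real.rpow_neg hσ.le, Real.rpow_one]
  have e2 : ((C*s*(p:ℝ)*β) ^ ((p:ℝ)/((p:ℝ)-1)))^m = (C*s*(p:ℝ)*β)^m * (C*s*(p:ℝ)*β) := by
    rw [← Real.rpow_natCast ((C*s*(p:ℝ)*β) ^ ((p:ℝ)/((p:ℝ)-1))) m, ← Real.rpow_mul hX, hmR,
      div_mul_cancel₀ _ (ne_of_gt hP1), Real.rpow_natCast, ← hm1, pow_succ]
  have e3 : (s ^ ((1:ℝ)/((p:ℝ)-1)))^m = s := by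
    rw [← Real.rpow_natCast (s ^ ((1:ℝ)/((p:ℝ)-1))) m, ← Real.rpow_mul hs.le, hmR,
      div_mul_cancel₀ _ (ne_of_gt hP1), Real.rpow_one]
  have e3' : (M * s ^ ((1:ℝ)/((p:ℝ)-1)))^m = M^m * s := by rw [mul_pow, e3]
  have base : ((p:ℝ)-1)^m * C * (p:ℝ) * β ≤ σ * M^m * (K+(p:ℝ))^m := by
    have hCC : C * (((p:ℝ)-1)^m * (p:ℝ)) ≤ σ * M^m :=
      (le_div_iff₀ (by positivity)).mp hCub
    calc ((p:ℝ)-1)^m * C * (p:ℝ) * β ≤ ((p:ℝ)-1)^m * C * (p:ℝ) * ((K+(p:ℝ))^m) := by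
          have := mul_le_mul_of_nonneg_left hβle (by positivity : (0:ℝ) ≤ ((p:ℝ)-1)^m * C * (p:ℝ))
          linarith
      _ = (C * (((p:ℝ)-1)^m * (p:ℝ))) * ((K+(p:ℝ))^m) := by ring
      _ ≤ (σ * M^m) * ((K+(p:ℝ))^m) := mul_le_mul_of_nonneg_right hCC (by positivity)
      _ = σ * M^m * (K+(p:ℝ))^m := by ring
  have base' : σ⁻¹ * (((p:ℝ)-1)^m * C * (p:ℝ) * β) ≤ M^m * (K+(p:ℝ))^m := by
    rw [inv_mul_le_iff₀ hσ]
    calc ((p:ℝ)-1)^m * C * (p:ℝ) * β ≤ σ * M^m * (K+(p:ℝ))^m := base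
      _ = σ * (M^m * (K+(p:ℝ))^m) := by ring
  calc (((p:ℝ)-1)/p * σ ^ (-(1:ℝ)/((p:ℝ)-1)) * (C*s*(p:ℝ)*β) ^ ((p:ℝ)/((p:ℝ)-1)))^m
      = (((p:ℝ)-1)/p)^m * σ⁻¹ * ((C*s*(p:ℝ)*β)^m * (C*s*(p:ℝ)*β)) := by
        rw [mul_pow, mul_pow, e1, e2]
    _ = ((C*s*β)^m * s) * (σ⁻¹ * (((p:ℝ)-1)^m * C * (p:ℝ) * β)) := by
        rw [div_pow, show (C*s*(p:ℝ)*β)^m = (C*s*β)^m * (p:ℝ)^m by ring]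
        have hpm : (p:ℝ)^m ≠ 0 := by positivity
        rw [div_mul_eq_mul_div, div_mul_eq_mul_div, div_eq_iff hpm]
        ring
    _ ≤ ((C*s*β)^m * s) * (M^m * (K+(p:ℝ))^m) :=
        mul_le_mul_of_nonneg_left base' (by positivity)
    _ = (C*s*((K+(p:ℝ))*β) * (M * s ^ ((1:ℝ)/((p:ℝ)-1))))^m := by
        conv_rhs => rw [mul_pow, e3', mul_pow, mul_pow, mul_pow]
        ring

end Aux

lemma bound_aux (p : ℕ) (hp : 2 ≤ p) {c a t : ℝ} (hc : 0 < c) (ha : 0 ≤ a) (ht : 0 ≤ t) :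
    a * t - c * t ^ p ≤ a + a ^ 2 / (4 * c) := by
  have hq : (0:ℝ) ≤ a ^ 2 / (4 * c) := by positivity
  rcases le_or_gt t 1 with hu | hu
  · have h5 : a * t ≤ a := by nlinarith
    have hnn : 0 ≤ c * t ^ p := mul_nonneg hc.le (pow_nonneg ht p)
    linarith
  · have h2p : t ^ 2 ≤ t ^ p := pow_le_pow_right₀ hu.le hp
    have h2p' : c * t ^ 2 ≤ c * t ^ p := mul_le_mul_of_nonneg_left h2p hc.le
    have key2 : a * t - c * t ^ 2 ≤ a ^ 2 / (4 * c) := by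
      rw [le_div_iff₀ (by positivity : (0:ℝ) < 4 * c)]
      nlinarith [sq_nonneg (2 * c * t - a)]
    linarith

set_option maxHeartbeats 1000000 in
/-- Higher-order mirror descent with `0 < C ≤ σM^{p−1}/((p−1)^{p−1}p)` satisfies
`f(y_k) − f(x*) ≤ D_φ(x*, x₀)/(Cs·k^{(p)})` for every `k ≥ 1`, where `k^{(p)}` is the
rising factorial and `D_φ(x*, x₀) = φ(x*) − φ(x₀) − ⟨z₀, x* − x₀⟩`. -/
theorem higher_order_mirror_descent_function_value_rate
{E : Type*} [NormedAddCommGroup E] [NormedSpace ℝ E] [FiniteDimensional ℝ E]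
    (p : ℕ) (hp : 2 ≤ p) (s C M σ : ℝ)
    (hs : 0 < s) (hM : 0 < M) (hσ : 0 < σ)
    -- f is a continuously differentiable convex function
    (f : E → ℝ) (f' : E → StrongDual ℝ E)
    (hfconv : ConvexOn ℝ Set.univ f)
    (hfd : ∀ x, HasFDerivAt f (f' x) x) (hfc : Continuous f')
    -- φ is σ-strongly convex of order p, with subgradient selection φ'
    (φ : E → ℝ) (φ' : E → StrongDual ℝ E)
    (hφconv : ConvexOn ℝ Set.univ φ)
    (hsub : ∀ x w, φ x + φ' x (w - x) ≤ φ w)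
    (hφsc : ∀ x y, (σ / p) * ‖x - y‖ ^ p ≤ φ x - φ y - φ' y (x - y))
    -- φ* is differentiable with gradient gφs
    (gφs : StrongDual ℝ E → E)
    (hgφs : ∀ z, HasFDerivAt (fenchelDual φ) (NormedSpace.inclusionInDoubleDual ℝ E (gφs z)) z)
    -- the higher-order mirror descent iteration
    (x y : ℕ → E) (z : ℕ → StrongDual ℝ E)
    (hx : ∀ k : ℕ, x (k + 1) =
      ((p : ℝ) / ((k : ℝ) + (p : ℝ))) • gφs (z k) + ((k : ℝ) / ((k : ℝ) + (p : ℝ))) • y k)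
    (hz : ∀ k : ℕ, z (k + 1) =
      z k - (C * s * (p : ℝ) * (Nat.ascFactorial (k + 1) (p - 1) : ℝ)) • f' (y (k + 1)))
    (hy : ∀ k : ℕ, M * s ^ ((1 : ℝ) / ((p : ℝ) - 1)) * ‖f' (y k)‖ ^ ((p : ℝ) / ((p : ℝ) - 1)) ≤
      f' (y k) (x k - y k))
    (hx0 : x 0 = gφs (z 0))
    -- x* is a global minimizer of f and ∇φ*(z*) = x*
    (xs : E) (zs : StrongDual ℝ E)
    (hxs : ∀ w, f xs ≤ f w) (hzs : gφs zs = xs)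
    (hC : 0 < C) (hCub : C ≤ σ * M ^ (p - 1) / (((p : ℝ) - 1) ^ (p - 1) * (p : ℝ))) :
    ∀ k : ℕ, 1 ≤ k →
      f (y k) - f xs ≤
        (φ xs - φ (x 0) - z 0 (xs - x 0)) / (C * s * (Nat.ascFactorial k p : ℝ)) := by
  have hP : (2:ℝ) ≤ (p:ℝ) := by exact_mod_cast hp
  have hPpos : (0:ℝ) < (p:ℝ) := by linarith
  have hP1 : (0:ℝ) < (p:ℝ) - 1 := by linarith
  -- boundedness of the Fenchel sup
  have hbdd : ∀ w : StrongDual ℝ E, BddAbove (Set.range fun u : E => w u - φ u) := by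
    intro w
    have hcpos : (0:ℝ) < σ / p := by positivity
    have hanon : (0:ℝ) ≤ ‖w‖ + ‖φ' 0‖ := by positivity
    refine ⟨(‖w‖ + ‖φ' 0‖) + (‖w‖ + ‖φ' 0‖)^2/(4*(σ/p)) - φ 0, ?_⟩
    rintro r ⟨u, rfl⟩
    have h1 : (σ/p) * ‖u - 0‖ ^ p ≤ φ u - φ 0 - φ' 0 (u - 0) := hφsc u 0
    rw [sub_zero] at h1
    have h2 : w u ≤ ‖w‖ * ‖u‖ := le_trans (le_abs_self _) (w.le_opNorm u)
    have h3 : -(φ' 0 u) ≤ ‖φ' 0‖ * ‖u‖ :=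
      le_trans (neg_le_abs _) ((φ' 0).le_opNorm u)
    have hkey := bound_aux p hp hcpos hanon (norm_nonneg u)
    simp only
    nlinarith [h1, h2, h3, hkey, norm_nonneg u]
  have hFY : ∀ (w : StrongDual ℝ E) (u : E), w u - φ u ≤ fenchelDual φ w :=
    fun w u => le_ciSup (hbdd w) u
  have hEqSub : ∀ (u : E) (g : StrongDual ℝ E), (∀ v, φ u + g (v - u) ≤ φ v) →
      fenchelDual φ g = g u - φ u := by
    intro u g hg
    refine le_antisymm (ciSup_le fun v => ?_) (hFY g u)
    have := hg v
    rw [map_sub] at this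
    linarith
  have hsegF : ∀ (z₁ z₂ : StrongDual ℝ E), ∀ t : ℝ, t ∈ Set.Ioc (0:ℝ) 1 →
      fenchelDual φ (z₁ + t • (z₂ - z₁)) ≤
        (1-t) * fenchelDual φ z₁ + t * fenchelDual φ z₂ := by
    intro z₁ z₂ t ht
    refine ciSup_le fun u => ?_
    have e : (z₁ + t • (z₂ - z₁)) u - φ u = (1-t) * (z₁ u - φ u) + t * (z₂ u - φ u) := by
      simp [ContinuousLinearMap.add_apply, ContinuousLinearMap.smul_apply,
        ContinuousLinearMap.sub_apply, smul_eq_mul]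
      ring
    rw [e]
    exact add_le_add (mul_le_mul_of_nonneg_left (hFY z₁ u) (by linarith [ht.2]))
      (mul_le_mul_of_nonneg_left (hFY z₂ u) ht.1.le)
  have hsubF : ∀ z₁ z₂ : StrongDual ℝ E,
      fenchelDual φ z₁ + (z₂ - z₁) (gφs z₁) ≤ fenchelDual φ z₂ := by
    intro z₁ z₂
    have h := grad_subgrad_aux (g := fenchelDual φ) (x := z₁)
      (fun w t ht => hsegF z₁ w t ht) (hgφs z₁) z₂
    rwa [NormedSpace.dual_def] at h
  have hC1 : ∀ zz, fenchelDual φ zz = zz (gφs zz) - φ (gφs zz) := by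
    intro zz
    refine le_antisymm ?_ (hFY zz (gφs zz))
    have h1 := hsubF zz (φ' (gφs zz))
    have h2 := hEqSub (gφs zz) (φ' (gφs zz)) (fun v => hsub (gφs zz) v)
    rw [h2, ContinuousLinearMap.sub_apply] at h1
    linarith
  have hsubφ : ∀ (zz : StrongDual ℝ E) (v : E),
      φ (gφs zz) + zz (v - gφs zz) ≤ φ v := by
    intro zz v
    have h1 := hFY zz v
    rw [hC1 zz] at h1
    rw [map_sub]
    linarith
  -- strong convexity w.r.t. an arbitrary subgradient
  have hsc' : ∀ (u : E) (g : StrongDual ℝ E), (∀ v, φ u + g (v - u) ≤ φ v) →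
      ∀ v, σ / p * ‖v - u‖ ^ p ≤ φ v - φ u - g (v - u) := by
    intro u g hg v
    have hstep : ∀ t : ℝ, 0 < t → t < 1 →
        σ / p * ((1-t)^p * ‖v - u‖ ^ p) ≤ φ v - φ u - g (v - u) := by
      intro t ht0 ht1
      set m := u + t • (v - u) with hm
      have hvm : v - m = (1 - t) • (v - u) := by
        rw [hm, sub_smul, one_smul]; abel
      have hum : u - m = (-t) • (v - u) := by
        rw [hm, neg_smul]; abel
      have hmu : m - u = t • (v - u) := by rw [hm]; abel
      have h1 := hφsc v m
      have h2 := hφsc u m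
      rw [hvm, norm_smul, Real.norm_eq_abs, abs_of_nonneg (by linarith : (0:ℝ) ≤ 1 - t),
        mul_pow, map_smul, smul_eq_mul] at h1
      rw [hum, norm_smul, Real.norm_eq_abs, abs_of_neg (by linarith : (-t) < 0),
        neg_neg, mul_pow, map_smul, smul_eq_mul] at h2
      have hgm := hg m
      rw [hmu, map_smul, smul_eq_mul] at hgm
      have h1' := mul_le_mul_of_nonneg_left h1 ht0.le
      have h2' := mul_le_mul_of_nonneg_left h2 (by linarith : (0:ℝ) ≤ 1 - t)
      have hpos : 0 ≤ (1-t) * (σ/p * (t^p * ‖v - u‖^p)) := by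
        apply mul_nonneg (by linarith)
        positivity
      have hgoal : t * (σ / p * ((1-t)^p * ‖v - u‖ ^ p)) ≤ t * (φ v - φ u - g (v - u)) := by
        linarith [h1', h2', hgm, hpos]
      exact le_of_mul_le_mul_left hgoal ht0
    have hlim : Tendsto (fun n : ℕ => σ/p * ((1 - 1/((n:ℝ)+2))^p * ‖v - u‖^p)) atTop
        (𝓝 (σ/p * ((1-0)^p * ‖v - u‖^p))) := by
      have h0 : Tendsto (fun n : ℕ => 1/((n:ℝ)+2)) atTop (𝓝 0) := by
        have ha : Tendsto (fun n : ℕ => ((n:ℝ)+2)) atTop atTop :=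
          tendsto_atTop_add_const_right atTop 2 tendsto_natCast_atTop_atTop
        have := ha.inv_tendsto_atTop
        simp only [one_div]
        exact this
      exact (((tendsto_const_nhds.sub h0).pow p).mul_const _).const_mul _
    have hev : ∀ n : ℕ, σ/p * ((1 - 1/((n:ℝ)+2))^p * ‖v - u‖^p) ≤ φ v - φ u - g (v - u) := by
      intro n
      have hn0 : (0:ℝ) < 1/((n:ℝ)+2) := by positivity
      have hn1 : 1/((n:ℝ)+2) < 1 := by
        rw [div_lt_one (by positivity)]
        linarith [Nat.cast_nonneg (α := ℝ) n]
      exact hstep _ hn0 hn1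
    have := le_of_tendsto hlim (Eventually.of_forall hev)
    simpa using this
  -- smoothness of the conjugate
  have hsmooth : ∀ z₁ z₂ : StrongDual ℝ E, fenchelDual φ z₂ ≤
      fenchelDual φ z₁ + (z₂ - z₁) (gφs z₁) +
        ((p:ℝ)-1)/p * σ ^ (-(1:ℝ)/((p:ℝ)-1)) * ‖z₂ - z₁‖ ^ ((p:ℝ)/((p:ℝ)-1)) := by
    intro z₁ z₂
    have h1 : σ / p * ‖gφs z₂ - gφs z₁‖ ^ p ≤
        φ (gφs z₂) - φ (gφs z₁) - z₁ (gφs z₂ - gφs z₁) :=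
      hsc' (gφs z₁) z₁ (hsubφ z₁) (gφs z₂)
    have h2 : (z₂ - z₁) (gφs z₂ - gφs z₁) ≤ ‖z₂ - z₁‖ * ‖gφs z₂ - gφs z₁‖ :=
      le_trans (le_abs_self _) ((z₂ - z₁).le_opNorm _)
    have h3 := young_aux p hp hσ (norm_nonneg (z₂ - z₁)) (norm_nonneg (gφs z₂ - gφs z₁))
    have e2 := hC1 z₂
    have e1 := hC1 z₁
    rw [map_sub] at h1
    rw [map_sub, ContinuousLinearMap.sub_apply, ContinuousLinearMap.sub_apply] at h2
    rw [ContinuousLinearMap.sub_apply]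
    linarith
  -- gradient inequality for f
  have hfsub : ∀ v w : E, f v + f' v (w - v) ≤ f w := by
    intro v w
    refine grad_subgrad_aux (fun w' t ht => ?_) (hfd v) w
    have h := hfconv.2 (Set.mem_univ v) (Set.mem_univ w')
      (by linarith [ht.2] : (0:ℝ) ≤ 1 - t) ht.1.le (by ring)
    have e : v + t • (w' - v) = (1-t) • v + t • w' := by
      rw [sub_smul, one_smul, smul_sub]; abel
    rw [e]
    simpa using h
  -- ascFactorial identities
  have hasc1 : ∀ k : ℕ, (Nat.ascFactorial k p : ℝ) =
      (k : ℝ) * (Nat.ascFactorial (k+1) (p-1) : ℝ) := by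
    intro k
    have hnat : Nat.ascFactorial k p = k * Nat.ascFactorial (k+1) (p-1) := by
      conv_lhs => rw [show p = (p-1)+1 by omega]
      rw [Nat.ascFactorial_succ, ← Nat.succ_ascFactorial]
    rw [hnat]; push_cast; ring
  have hasc2 : ∀ k : ℕ, (Nat.ascFactorial (k+1) p : ℝ) =
      ((k : ℝ) + (p : ℝ)) * (Nat.ascFactorial (k+1) (p-1) : ℝ) := by
    intro k
    have hnat : Nat.ascFactorial (k+1) p = (k + p) * Nat.ascFactorial (k+1) (p-1) := by
      conv_lhs => rw [show p = (p-1)+1 by omega]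
      rw [Nat.ascFactorial_succ, show k + 1 + (p-1) = k + p by omega]
    rw [hnat]; push_cast; ring
  -- one-step decrease of the potential
  have hdec : ∀ k : ℕ,
      C*s*(Nat.ascFactorial (k+1) p : ℝ) * (f (y (k+1)) - f xs)
        + fenchelDual φ (z (k+1)) - z (k+1) xs ≤
      C*s*(Nat.ascFactorial k p : ℝ) * (f (y k) - f xs)
        + fenchelDual φ (z k) - z k xs := by
    intro k
    have hβpos : (0:ℝ) < (Nat.ascFactorial (k+1) (p-1) : ℝ) := by
      exact_mod_cast Nat.ascFactorial_pos k (p-1)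
    have hKP : (0:ℝ) < (k:ℝ) + (p:ℝ) := by positivity
    have hzd : z (k+1) - z k =
        -((C * s * (p : ℝ) * (Nat.ascFactorial (k + 1) (p - 1) : ℝ)) • f' (y (k + 1))) := by
      rw [hz k]; abel
    have hδ : (0:ℝ) ≤ C * s * (p : ℝ) * (Nat.ascFactorial (k + 1) (p - 1) : ℝ) := by positivity
    have h3 := hsmooth (z k) (z (k+1))
    have hnorm : ‖z (k+1) - z k‖ =
        (C * s * (p : ℝ) * (Nat.ascFactorial (k + 1) (p - 1) : ℝ)) * ‖f' (y (k+1))‖ := by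
      rw [hzd, norm_neg, norm_smul, Real.norm_eq_abs, abs_of_nonneg hδ]
    have happu : (z (k+1) - z k) (gφs (z k)) =
        -((C * s * (p : ℝ) * (Nat.ascFactorial (k + 1) (p - 1) : ℝ)) *
          f' (y (k+1)) (gφs (z k))) := by
      rw [hzd]; simp [smul_eq_mul]
    have hrq : ‖z (k+1) - z k‖ ^ ((p:ℝ)/((p:ℝ)-1)) =
        (C * s * (p : ℝ) * (Nat.ascFactorial (k + 1) (p - 1) : ℝ)) ^ ((p:ℝ)/((p:ℝ)-1)) *
          ‖f' (y (k+1))‖ ^ ((p:ℝ)/((p:ℝ)-1)) := by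
      rw [hnorm, Real.mul_rpow hδ (norm_nonneg _)]
    rw [happu, hrq] at h3
    have happxs : z (k+1) xs = z k xs -
        (C * s * (p : ℝ) * (Nat.ascFactorial (k + 1) (p - 1) : ℝ)) * f' (y (k+1)) xs := by
      rw [hz k]; simp [smul_eq_mul]
    have h4 := hy (k+1)
    rw [map_sub] at h4
    have hgx : f' (y (k+1)) (x (k+1)) =
        (p : ℝ) / ((k : ℝ) + (p : ℝ)) * f' (y (k+1)) (gφs (z k)) +
        (k : ℝ) / ((k : ℝ) + (p : ℝ)) * f' (y (k+1)) (y k) := by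
      rw [hx k]; simp [map_add, map_smul, smul_eq_mul]
    have h1 := hfsub (y (k+1)) xs
    have h2 := hfsub (y (k+1)) (y k)
    rw [map_sub] at h1 h2
    -- key coefficient bound
    have hβle : (Nat.ascFactorial (k+1) (p-1) : ℝ) ≤ ((k:ℝ) + (p:ℝ))^(p-1) := by
      have hnat : Nat.ascFactorial (k+1) (p-1) ≤ (k + p)^(p-1) :=
        le_trans (Nat.ascFactorial_le_pow_add k (p-1))
          (Nat.pow_le_pow_left (by omega) (p-1))
      calc (Nat.ascFactorial (k+1) (p-1) : ℝ) ≤ ((k + p : ℕ) : ℝ)^(p-1) := by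
            exact_mod_cast hnat
        _ = ((k:ℝ) + (p:ℝ))^(p-1) := by push_cast; ring
    have key := key_aux p hp hσ hC hs hM hβpos (Nat.cast_nonneg k) hCub hβle
    have h6 := mul_le_mul_of_nonneg_right key
      (Real.rpow_nonneg (norm_nonneg (f' (y (k+1)))) ((p:ℝ)/((p:ℝ)-1)))
    -- multiplied versions
    have hApos : (0:ℝ) ≤ C*s*(((k:ℝ) + (p:ℝ)) * (Nat.ascFactorial (k+1) (p-1) : ℝ)) := by
      positivity
    have hApos' : (0:ℝ) ≤ C*s*((k:ℝ) * (Nat.ascFactorial (k+1) (p-1) : ℝ)) := by positivity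
    have m3 := mul_le_mul_of_nonneg_left h4 hApos
    have m1 := mul_le_mul_of_nonneg_left
      (by linarith : f (y (k+1)) - f (y k) ≤ f' (y (k+1)) (y (k+1)) - f' (y (k+1)) (y k)) hApos'
    have m2 := mul_le_mul_of_nonneg_left
      (by linarith : f (y (k+1)) - f xs ≤ f' (y (k+1)) (y (k+1)) - f' (y (k+1)) xs) hδ
    have mgx : C*s*(((k:ℝ) + (p:ℝ)) * (Nat.ascFactorial (k+1) (p-1) : ℝ)) *
        f' (y (k+1)) (x (k+1)) =
        C * s * (p : ℝ) * (Nat.ascFactorial (k + 1) (p - 1) : ℝ) * f' (y (k+1)) (gφs (z k)) +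
        C*s*((k:ℝ) * (Nat.ascFactorial (k+1) (p-1) : ℝ)) * f' (y (k+1)) (y k) := by
      rw [hgx]
      field_simp
    rw [hasc1 k, hasc2 k, happxs]
    nlinarith [h3, m1, m2, m3, mgx, h6]
  -- potential is bounded by its initial value
  have h0asc : (Nat.ascFactorial 0 p : ℝ) = 0 := by
    have := Nat.zero_ascFactorial (p-1)
    rw [show (p-1).succ = p by omega] at this
    rw [this]; norm_num
  have hmono : ∀ k : ℕ,
      C*s*(Nat.ascFactorial k p : ℝ) * (f (y k) - f xs)
        + fenchelDual φ (z k) - z k xs ≤ fenchelDual φ (z 0) - z 0 xs := by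
    intro k
    induction k with
    | zero => rw [h0asc]; ring_nf; rfl
    | succ n ih => exact le_trans (hdec n) ih
  -- conclusion
  intro k hk
  have hkasc : (0:ℝ) < (Nat.ascFactorial k p : ℝ) := by
    have : 0 < Nat.ascFactorial k p := by
      have := Nat.ascFactorial_pos (k-1) p
      rwa [show k - 1 + 1 = k by omega] at this
    exact_mod_cast this
  have hkpos : (0:ℝ) < C * s * (Nat.ascFactorial k p : ℝ) := by positivity
  have hD : z k xs - φ xs ≤ fenchelDual φ (z k) := hFY (z k) xs
  have hF0 : fenchelDual φ (z 0) = z 0 (x 0) - φ (x 0) := by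
    rw [hx0]; exact hC1 (z 0)
  have hmk := hmono k
  rw [le_div_iff₀ hkpos, map_sub]
  nlinarith [hmk, hD, hF0]
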